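/- For all n ≥ 1, the sequence a defined by a_0 = 1, a_{2n+1} = Σ_{i=0}^{n} a_{2i}·a_{2n-2i}, and a_{2n} = Σ_{i=0}^{2n-1} a_i·a_{2n-1-i} satisfies a_{2n} = (2^n/(2n+1))·C(3n, n). -/

import Mathlib

def psi (r n : ℕ) : ℚ := if n = 0 then 1 else r * (Nat.choose (3*n+r) n) / (3*n+r)

lemma psi_zero_right (r : ℕ) : psi r 0 = 1 := rfl

lemma psi_zero_left (n : ℕ) (hn : n ≠ 0) : psi 0 n = 0 := by
  simp [psi, hn]

lemma psi_eq (r n : ℕ) (h : 0 < r) :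
    psi r n = (r * Nat.choose (3*n+r) n : ℚ) / (3*n+r) := by
  rcases n with _ | n
  · simp [psi]
    rw [div_self]
    positivity
  · rfl

lemma psi_rec (r n : ℕ) : psi (r+1) (n+1) = psi r (n+1) + psi (r+3) n := by
  have key : (Nat.choose (3*n+r+3) (n+1) : ℚ) * (n+1)
      = (Nat.choose (3*n+r+3) n) * (2*n+r+3) := by
    have := Nat.choose_succ_right_eq (3*n+r+3) n
    have h2 : 3*n+r+3 - n = 2*n+r+3 := by omega
    rw [h2] at this
    exact_mod_cast congrArg (Nat.cast : ℕ → ℚ) this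
  have pascal : (Nat.choose (3*n+r+4) (n+1) : ℚ)
      = Nat.choose (3*n+r+3) n + Nat.choose (3*n+r+3) (n+1) := by
    have := Nat.choose_succ_succ (3*n+r+3) n
    exact_mod_cast congrArg (Nat.cast : ℕ → ℚ) this
  have e1 : psi (r+1) (n+1) = ((r+1) * Nat.choose (3*n+r+4) (n+1) : ℚ) / (3*n+r+4) := by
    rw [psi_eq _ _ (by omega)]
    push_cast
    ring_nf
  have e3 : psi (r+3) n = ((r+3) * Nat.choose (3*n+r+3) n : ℚ) / (3*n+r+3) := by
    rw [psi_eq _ _ (by omega)]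
    push_cast
    ring_nf
  have e2 : psi r (n+1) = (r * Nat.choose (3*n+r+3) (n+1) : ℚ) / (3*n+r+3) := by
    rcases Nat.eq_zero_or_pos r with h | h
    · subst h; simp [psi_zero_left]
    · rw [psi_eq _ _ h]
      push_cast
      ring_nf
  rw [e1, e2, e3, pascal]
  have d1 : ((3:ℚ)*n+r+4) ≠ 0 := by positivity
  have d2 : ((3:ℚ)*n+r+3) ≠ 0 := by positivity
  field_simp
  linear_combination (3:ℚ) * key

lemma conv : ∀ n r s : ℕ,
    (∑ i ∈ Finset.range (n+1), psi r i * psi s (n-i)) = psi (r+s) n := by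
  intro n
  induction n using Nat.strong_induction_on with
  | _ n ih =>
    intro r s
    induction s with
    | zero =>
      have hz : ∀ i ∈ Finset.range n, psi r i * psi 0 (n-i) = 0 := by
        intro i hi
        have := Finset.mem_range.mp hi
        rw [psi_zero_left _ (by omega), mul_zero]
      rw [Finset.sum_range_succ, Finset.sum_eq_zero hz, Nat.sub_self,
        psi_zero_right, mul_one, zero_add, Nat.add_zero]
    | succ s ihs =>
      rcases n with _ | m
      · simp [psi_zero_right]
      · have step : ∀ i ∈ Finset.range (m+1),
            psi r i * psi (s+1) (m+1-i)
              = psi r i * psi s (m+1-i) + psi r i * psi (s+3) (m-i) := by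
          intro i hi
          have hi' := Finset.mem_range.mp hi
          have h : m + 1 - i = (m - i) + 1 := by omega
          rw [h, psi_rec, mul_add]
        have h1 := ihs
        rw [Finset.sum_range_succ, Nat.sub_self, psi_zero_right, mul_one] at h1 ⊢
        rw [Finset.sum_congr rfl step, Finset.sum_add_distrib]
        have h2 : (∑ i ∈ Finset.range (m+1), psi r i * psi (s+3) (m-i))
            = psi (r+s+3) m := by
          rw [ih m (by omega) r (s+3)]; congr 1
        rw [add_right_comm, h1, h2]
        have h3 : r + (s+1) = (r+s) + 1 := by omega
        rw [h3, psi_rec]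

lemma psi_one_succ (m : ℕ) : psi 1 (m+1) = psi 3 m := by
  have := psi_rec 0 m
  rw [psi_zero_left _ (by omega)] at this
  simpa using this

lemma sum_split (f : ℕ → ℚ) (n : ℕ) :
    ∑ i ∈ Finset.range (2*n), f i = ∑ j ∈ Finset.range n, (f (2*j) + f (2*j+1)) := by
  induction n with
  | zero => simp
  | succ m ihm =>
    have h : 2*(m+1) = (2*m+1)+1 := by ring
    rw [h, Finset.sum_range_succ, Finset.sum_range_succ, ihm, Finset.sum_range_succ]
    ring

lemma main_ind (a : ℕ → ℕ) (h0 : a 0 = 1)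
    (hodd : ∀ n : ℕ, a (2 * n + 1) = ∑ i ∈ Finset.range (n + 1), a (2 * i) * a (2 * n - 2 * i))
    (heven : ∀ n : ℕ, 1 ≤ n → a (2 * n) = ∑ i ∈ Finset.range (2 * n), a i * a (2 * n - 1 - i)) :
    ∀ n : ℕ, ((a (2*n) : ℚ) = 2^n * psi 1 n) ∧ ((a (2*n+1) : ℚ) = 2^n * psi 2 n) := by
  intro n
  induction n using Nat.strong_induction_on with
  | _ n ih =>
    rcases n with _ | m
    · constructor
      · simp [h0, psi_zero_right]
      · have h1 := hodd 0
        simp [h0] at h1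
        simp [h1, psi_zero_right]
    · have heven' : (a (2*(m+1)) : ℚ) = 2^(m+1) * psi 1 (m+1) := by
        have he := heven (m+1) (by omega)
        have hcast : (a (2*(m+1)) : ℚ) = ∑ i ∈ Finset.range (2*(m+1)),
            (a i : ℚ) * (a (2*(m+1)-1-i) : ℚ) := by
          rw [he]; push_cast; rfl
        rw [hcast, sum_split]
        have hterm : ∀ j ∈ Finset.range (m+1),
            ((a (2*j) : ℚ) * (a (2*(m+1)-1-2*j) : ℚ)
              + (a (2*j+1) : ℚ) * (a (2*(m+1)-1-(2*j+1)) : ℚ))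
            = 2^m * (psi 1 j * psi 2 (m-j)) + 2^m * (psi 2 j * psi 1 (m-j)) := by
          intro j hj
          have hj' := Finset.mem_range.mp hj
          have e1 : 2*(m+1)-1-2*j = 2*(m-j)+1 := by omega
          have e2 : 2*(m+1)-1-(2*j+1) = 2*(m-j) := by omega
          rw [e1, e2, (ih j (by omega)).1, (ih j (by omega)).2,
            (ih (m-j) (by omega)).1, (ih (m-j) (by omega)).2]
          have hp : (2:ℚ)^j * (2:ℚ)^(m-j) = 2^m := by
            rw [← pow_add]; congr 1; omega
          linear_combination (psi 1 j * psi 2 (m-j) + psi 2 j * psi 1 (m-j)) * hp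
        rw [Finset.sum_congr rfl hterm, Finset.sum_add_distrib,
          ← Finset.mul_sum, ← Finset.mul_sum, conv m 1 2, conv m 2 1]
        rw [psi_one_succ]
        ring
      refine ⟨heven', ?_⟩
      have ho := hodd (m+1)
      have hcast : (a (2*(m+1)+1) : ℚ) = ∑ i ∈ Finset.range (m+2),
          (a (2*i) : ℚ) * (a (2*(m+1)-2*i) : ℚ) := by
        rw [ho]; push_cast; rfl
      rw [hcast]
      have hterm : ∀ i ∈ Finset.range (m+2),
          (a (2*i) : ℚ) * (a (2*(m+1)-2*i) : ℚ)
            = 2^(m+1) * (psi 1 i * psi 1 (m+1-i)) := by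
        intro i hi
        have hi' := Finset.mem_range.mp hi
        have e1 : 2*(m+1)-2*i = 2*(m+1-i) := by omega
        have g1 : (a (2*i) : ℚ) = 2^i * psi 1 i := by
          rcases Nat.lt_or_ge i (m+1) with h | h
          · exact (ih i h).1
          · have : i = m+1 := by omega
            rw [this]; exact heven'
        have g2 : (a (2*(m+1-i)) : ℚ) = 2^(m+1-i) * psi 1 (m+1-i) := by
          rcases Nat.lt_or_ge (m+1-i) (m+1) with h | h
          · exact (ih _ h).1
          · have : m+1-i = m+1 := by omega
            rw [this]; exact heven'
        rw [e1, g1, g2]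
        have hp : (2:ℚ)^i * (2:ℚ)^(m+1-i) = 2^(m+1) := by
          rw [← pow_add]; congr 1; omega
        linear_combination (psi 1 i * psi 1 (m+1-i)) * hp
      rw [Finset.sum_congr rfl hterm, ← Finset.mul_sum]
      have := conv (m+1) 1 1
      rw [this]

theorem stmt0 (a : ℕ → ℕ) (h0 : a 0 = 1)
    (hodd : ∀ n : ℕ, a (2 * n + 1) = ∑ i ∈ Finset.range (n + 1), a (2 * i) * a (2 * n - 2 * i))
    (heven : ∀ n : ℕ, 1 ≤ n → a (2 * n) = ∑ i ∈ Finset.range (2 * n), a i * a (2 * n - 1 - i)) :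
    ∀ n : ℕ, 1 ≤ n → (a (2 * n) : ℚ) = 2 ^ n / (2 * n + 1) * Nat.choose (3 * n) n := by
  intro n hn
  have h1 := (main_ind a h0 hodd heven n).1
  rw [h1, psi_eq 1 n (by omega)]
  have key : ((3*n+1) * Nat.choose (3*n) n : ℚ) = (2*n+1) * Nat.choose (3*n+1) n := by
    have k1 := Nat.add_one_mul_choose_eq (3*n) n
    have k2 := Nat.choose_succ_right_eq (3*n+1) n
    have e : 3*n+1 - n = 2*n+1 := by omega
    rw [e] at k2
    have : (3*n+1) * Nat.choose (3*n) n = (2*n+1) * Nat.choose (3*n+1) n := by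
      calc (3*n+1) * Nat.choose (3*n) n = Nat.choose (3*n+1) (n+1) * (n+1) := k1
        _ = Nat.choose (3*n+1) n * (2*n+1) := k2
        _ = (2*n+1) * Nat.choose (3*n+1) n := by ring
    exact_mod_cast congrArg (Nat.cast : ℕ → ℚ) this
  have d1 : ((3:ℚ)*n+1) ≠ 0 := by positivity
  have d2 : ((2:ℚ)*n+1) ≠ 0 := by positivity
  push_cast at key ⊢
  field_simp
  linear_combination (-1:ℚ) * key
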